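/- For all integers n ≥ 0 and k ≥ 1, the determinant of the n×n matrix over ℚ(q) with entries q^{(i-j)(i-j-1)/2} · ([2i+k+1]/[i+j+k]) · [i+j+k choose i-j+1] for 0 ≤ j ≤ i+1 and 0 for j > i+1, 0 ≤ i, j ≤ n-1, equals [2n+k-1 choose n]. -/

import Mathlib

/-- The indeterminate `q` in the field `ℚ(q)` of rational functions. -/
noncomputable def qq : RatFunc ℚ := RatFunc.X

/-- The `q`-integer `[n] = 1 + q + ⋯ + q^{n-1}`. -/
noncomputable def qInt (n : ℕ) : RatFunc ℚ := ∑ i ∈ Finset.range n, qq ^ i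

/-- The `q`-factorial `[n]! = [1][2]⋯[n]`. -/
noncomputable def qFact (n : ℕ) : RatFunc ℚ := ∏ i ∈ Finset.range n, qInt (i + 1)

/-- The Gaussian `q`-binomial coefficient `[a choose b] = [a]!/([b]![a-b]!)` for `b ≤ a`,
and `0` for `b > a`. -/
noncomputable def qChoose (a b : ℕ) : RatFunc ℚ :=
  if b ≤ a then qFact a / (qFact b * qFact (a - b)) else 0

lemma qq_eq : qq = algebraMap (Polynomial ℚ) (RatFunc ℚ) Polynomial.X := rfl

lemma qInt_eq (n : ℕ) : qInt n = algebraMap (Polynomial ℚ) (RatFunc ℚ)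
    (∑ i ∈ Finset.range n, Polynomial.X ^ i) := by
  simp [qInt, qq_eq, map_sum, map_pow]

lemma qInt_ne_zero {n : ℕ} (h : 1 ≤ n) : qInt n ≠ 0 := by
  rw [qInt_eq]
  apply RatFunc.algebraMap_ne_zero
  intro hc
  have := congrArg (Polynomial.eval (1:ℚ)) hc
  simp [Polynomial.eval_finset_sum] at this
  omega

lemma qFact_ne_zero (n : ℕ) : qFact n ≠ 0 := by
  unfold qFact
  apply Finset.prod_ne_zero_iff.2
  intro i _
  exact qInt_ne_zero (by omega)

lemma qFact_succ (n : ℕ) : qFact (n+1) = qFact n * qInt (n+1) := Finset.prod_range_succ _ n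

lemma qInt_add (a b : ℕ) : qInt (a+b) = qInt a + qq ^ a * qInt b := by
  unfold qInt
  rw [Finset.sum_range_add, Finset.mul_sum]
  simp [pow_add]

lemma qChoose_of_le {a b : ℕ} (h : b ≤ a) :
    qChoose a b = qFact a / (qFact b * qFact (a-b)) := if_pos h

lemma qChoose_zero (a : ℕ) : qChoose a 0 = 1 := by
  rw [qChoose_of_le (Nat.zero_le a)]
  simp [qFact]
  exact qFact_ne_zero a

lemma qChoose_ne_zero {a b : ℕ} (h : b ≤ a) : qChoose a b ≠ 0 := by
  rw [qChoose_of_le h]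
  exact div_ne_zero (qFact_ne_zero a) (mul_ne_zero (qFact_ne_zero b) (qFact_ne_zero _))

/-- Core `q`-integer identity behind the telescoping. -/
lemma core (p s t : ℕ) :
    qInt (p+2*s+t+3) * qInt (s+1)
      = qInt (2*s+t+2) * qInt (p+s+2) - qq^(s+1) * qInt (s+t+1) * qInt (p+1) := by
  have h1 : qInt (2*s+t+2) = qInt (s+1) + qq^(s+1) * qInt (s+t+1) := by
    have := qInt_add (s+1) (s+t+1)
    rw [show s+1+(s+t+1) = 2*s+t+2 by ring] at this; exact this
  have h2 : qInt (p+2*s+t+3) = qInt (p+s+2) + qq^(p+s+2) * qInt (s+t+1) := by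
    have := qInt_add (p+s+2) (s+t+1)
    rw [show p+s+2+(s+t+1) = p+2*s+t+3 by ring] at this; exact this
  have h3 : qInt (p+s+2) = qInt (p+1) + qq^(p+1) * qInt (s+1) := by
    have := qInt_add (p+1) (s+1)
    rw [show p+1+(s+1) = p+s+2 by ring] at this; exact this
  rw [h1, h2, h3]
  ring

def e2 (s : ℕ) : ℕ := ∑ i ∈ Finset.range s, i
lemma e2_succ (s : ℕ) : e2 (s+1) = e2 s + s := Finset.sum_range_succ _ s

lemma toNat_exp (s : ℕ) : (((s:ℤ) - ((0:ℕ):ℤ)) * ((s:ℤ) - ((0:ℕ):ℤ) - 1) / 2).toNat = e2 s := by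
  induction s with
  | zero => simp [e2]
  | succ s ih =>
    have h0 : (0:ℤ) ≤ (s:ℤ) * ((s:ℤ) - 1) := by
      rcases Nat.eq_zero_or_pos s with h | h
      · simp [h]
      · apply mul_nonneg (by positivity)
        omega
    have key : (((s+1:ℕ):ℤ) - ((0:ℕ):ℤ)) * (((s+1:ℕ):ℤ) - ((0:ℕ):ℤ) - 1) / 2
        = ((s:ℤ) - ((0:ℕ):ℤ)) * ((s:ℤ) - ((0:ℕ):ℤ) - 1) / 2 + s := by
      have h1 : (((s+1:ℕ):ℤ) - ((0:ℕ):ℤ)) * (((s+1:ℕ):ℤ) - ((0:ℕ):ℤ) - 1)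
          = ((s:ℤ) - ((0:ℕ):ℤ)) * ((s:ℤ) - ((0:ℕ):ℤ) - 1) + (s:ℤ) * 2 := by push_cast; ring
      rw [h1, Int.add_mul_ediv_right _ _ (by norm_num)]
    rw [key, Int.toNat_add (by positivity) (by positivity), ih, e2_succ]
    simp

lemma qChoose_succ_right {a b : ℕ} (h : b+1 ≤ a) :
    qChoose a (b+1) = qChoose a b * (qInt (a-b) / qInt (b+1)) := by
  rw [qChoose_of_le h, qChoose_of_le (by omega)]
  obtain ⟨c, rfl⟩ : ∃ c, a = b + 1 + c := ⟨a - (b+1), by omega⟩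
  have h1 : b + 1 + c - (b+1) = c := by omega
  have h2 : b + 1 + c - b = c + 1 := by omega
  rw [h1, h2, qFact_succ b, qFact_succ c]
  have n1 := qFact_ne_zero b
  have n2 := qFact_ne_zero c
  have n3 := qInt_ne_zero (show 1 ≤ b+1 by omega)
  have n4 := qInt_ne_zero (show 1 ≤ c+1 by omega)
  field_simp

lemma qChoose_succ_both {a b : ℕ} (h : b ≤ a) :
    qChoose (a+1) (b+1) = qChoose a b * (qInt (a+1) / qInt (b+1)) := by
  rw [qChoose_of_le (by omega), qChoose_of_le h]
  have h1 : a + 1 - (b+1) = a - b := by omega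
  rw [h1, qFact_succ a, qFact_succ b]
  have n1 := qFact_ne_zero b
  have n2 := qFact_ne_zero (a-b)
  have n3 := qInt_ne_zero (show 1 ≤ b+1 by omega)
  have n4 := qInt_ne_zero (show 1 ≤ a+1 by omega)
  have n5 := qFact_ne_zero a
  field_simp

/-- The entry function of the matrix. -/
noncomputable def ent (k i j : ℕ) : RatFunc ℚ :=
  if j ≤ i + 1 then
    qq ^ (((i : ℤ) - (j : ℤ)) * ((i : ℤ) - (j : ℤ) - 1) / 2).toNat *
      (qInt (2 * i + k + 1) / qInt (i + j + k)) *
      qChoose (i + j + k) (i + 1 - j)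
  else 0

lemma ent_shift (k i j : ℕ) : ent k (i+1) (j+1) = ent (k+2) i j := by
  unfold ent
  have h1 : (((i+1:ℕ) : ℤ) - ((j+1:ℕ) : ℤ)) = ((i:ℕ):ℤ) - ((j:ℕ):ℤ) := by push_cast; ring
  rw [h1]
  have h2 : 2*(i+1)+k+1 = 2*i+(k+2)+1 := by ring
  have h3 : (i+1)+(j+1)+k = i+j+(k+2) := by ring
  have h4 : (i+1)+1-(j+1) = i+1-j := by omega
  rw [h2, h3, h4]
  by_cases h : j ≤ i + 1
  · rw [if_pos (by omega), if_pos h]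
  · rw [if_neg (by omega), if_neg h]

lemma ent_superdiag (k i : ℕ) (hk : 1 ≤ k) : ent k i (i+1) = qq := by
  unfold ent
  rw [if_pos (le_refl _)]
  have h1 : (((i:ℕ) : ℤ) - ((i+1:ℕ) : ℤ)) = -1 := by push_cast; ring
  rw [h1]
  norm_num
  have h2 : i + (i+1) + k = 2*i+k+1 := by ring
  rw [h2, div_self (qInt_ne_zero (by omega))]
  have h3 : qChoose (2*i+k+1) 0 = 1 := qChoose_zero _
  rw [h3]
  ring

lemma ent_far {k i j : ℕ} (h : i + 1 < j) : ent k i j = 0 := if_neg (by omega)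

lemma ent_col0 (k s : ℕ) :
    ent k s 0 = qq^(e2 s) * (qInt (2*s+k+1) / qInt (s+k)) * qChoose (s+k) (s+1) := by
  unfold ent
  rw [if_pos (by omega)]
  rw [show ((0:ℕ):ℤ) = ((0:ℕ):ℤ) from rfl, toNat_exp s]
  norm_num

/-- The generalized matrix family. -/
noncomputable def Bm (n k s : ℕ) : Matrix (Fin n) (Fin n) (RatFunc ℚ) :=
  Matrix.of fun r c => if (c : ℕ) = 0 then ent k (s + (r:ℕ)) 0 else ent (k + 2*s) (r:ℕ) (c:ℕ)

lemma Bm_zero (n k : ℕ) (r c : Fin n) : Bm n k 0 r c = ent k (r:ℕ) (c:ℕ) := by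
  simp only [Bm, Matrix.of_apply]
  split
  · next h => rw [h]; norm_num
  · norm_num

lemma Bm_minor0 (n k s : ℕ) :
    (Bm (n+1) k s).submatrix Fin.succ (0 : Fin (n+1)).succAbove = Bm n (k+2*s+2) 0 := by
  funext r c
  rw [Bm_zero]
  simp only [Fin.succAbove_zero, Matrix.submatrix_apply, Bm, Matrix.of_apply, Fin.val_succ]
  rw [if_neg (by omega)]
  have := ent_shift (k+2*s) (r:ℕ) (c:ℕ)
  convert this using 2 <;> omega

lemma Bm_minor1 (n k s : ℕ) :
    (Bm (n+2) k s).submatrix Fin.succ (1 : Fin (n+2)).succAbove = Bm (n+1) k (s+1) := by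
  funext r c
  simp only [Matrix.submatrix_apply, Bm, Matrix.of_apply, Fin.val_succ]
  cases c using Fin.cases with
  | zero =>
    have h0 : (1 : Fin (n+2)).succAbove 0 = 0 := rfl
    rw [h0]
    simp only [Fin.val_zero, if_pos rfl, if_true]
    congr 1
    omega
  | succ c =>
    have h1 : (1 : Fin (n+2)).succAbove c.succ = c.succ.succ := by
      exact Fin.succAbove_of_le_castSucc _ _ (by simp [Fin.le_def])
    rw [h1]
    simp only [Fin.val_succ]
    rw [if_neg (by omega), if_neg (by omega)]
    have := ent_shift (k+2*s) (r:ℕ) ((c:ℕ)+1)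
    convert this using 2 <;> omega

lemma step_scalar (p s t : ℕ) :
    (qInt (p+2*s+t+3) / qInt (p+s+2)) * (qInt (p+2*s+t+4) / qInt (p+1))
      = (qInt (2*s+t+2) / qInt (s+t+1)) * (qInt (s+t+1) / qInt (s+1)) * (qInt (p+2*s+t+4) / qInt (p+1))
        - qq^(s+1) * (qInt (s+t+1) / qInt (s+1)) * (qInt (p+2*s+t+4) / qInt (p+s+2)) := by
  have n1 := qInt_ne_zero (show 1 ≤ s+t+1 by omega)
  have n2 := qInt_ne_zero (show 1 ≤ s+1 by omega)
  have n3 := qInt_ne_zero (show 1 ≤ p+1 by omega)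
  have n4 := qInt_ne_zero (show 1 ≤ p+s+2 by omega)
  have hcore := core p s t
  field_simp
  linear_combination (qInt (p+2*s+t+4)) * hcore

/-- Closed form for the determinant of the generalized family. -/
lemma detBm : ∀ (n t s : ℕ), (Bm (n+1) (t+1) s).det
    = qq^(e2 s) * qChoose (s+t) s * (qInt (n+2*s+t+2) / qInt (n+s+1)) * qChoose (2*(n+s)+t+2) n := by
  intro n
  induction n with
  | zero =>
    intro t s
    rw [Matrix.det_fin_one]
    have h00 : Bm 1 (t+1) s 0 0 = ent (t+1) s 0 := by
      simp [Bm]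
    rw [h00, ent_col0]
    rw [show 2*s+(t+1)+1 = 2*s+t+2 by ring, show s+(t+1) = s+t+1 by ring]
    rw [qChoose_succ_both (show s ≤ s+t by omega), show s+t+1 = (s+t)+1 from rfl]
    rw [show (2*(0+s)+t+2) = 2*s+t+2 by ring, qChoose_zero]
    have n1 := qInt_ne_zero (show 1 ≤ s+t+1 by omega)
    have n2 := qInt_ne_zero (show 1 ≤ s+1 by omega)
    have n3 := qInt_ne_zero (show 1 ≤ 2*s+t+2 by omega)
    rw [show (0:ℕ)+s+1 = s+1 by ring, show (0:ℕ)+2*s+t+2 = 2*s+t+2 by ring]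
    field_simp
  | succ p ih =>
    intro t s
    rw [Matrix.det_succ_row_zero, Fin.sum_univ_succ, Fin.sum_univ_succ]
    have hzero : ∀ j : Fin p, ((-1:RatFunc ℚ)) ^ ((j.succ.succ : Fin (p+2)) : ℕ)
        * Bm (p+2) (t+1) s 0 j.succ.succ
        * ((Bm (p+2) (t+1) s).submatrix Fin.succ (j.succ.succ).succAbove).det = 0 := by
      intro j
      have : Bm (p+2) (t+1) s 0 j.succ.succ = 0 := by
        simp only [Bm, Matrix.of_apply, Fin.val_succ, Fin.val_zero]
        rw [if_neg (by omega)]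
        exact ent_far (by omega)
      rw [this]; ring
    rw [Finset.sum_eq_zero (fun j _ => hzero j), add_zero]
    have h00 : Bm (p+2) (t+1) s 0 0 = ent (t+1) s 0 := by
      simp [Bm]
    have h01 : Bm (p+2) (t+1) s 0 1 = qq := by
      simp only [Bm, Matrix.of_apply, Fin.val_zero, Fin.val_one]
      simp only [one_ne_zero, ↓reduceIte]
      exact ent_superdiag (t+1+2*s) 0 (by omega)
    have hm0 : ((Bm (p+2) (t+1) s).submatrix Fin.succ ((0:Fin (p+2)).succAbove)).det
        = (Bm (p+1) ((t+2*s+2)+1) 0).det := by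
      rw [Bm_minor0, show t+1+2*s+2 = t+2*s+2+1 from by ring]
    have hm1 : ((Bm (p+2) (t+1) s).submatrix Fin.succ ((1:Fin (p+2)).succAbove)).det
        = (Bm (p+1) (t+1) (s+1)).det := by
      rw [Bm_minor1]
    simp only [Fin.succ_zero_eq_one, Fin.val_zero, Fin.val_one, pow_zero, pow_one]
    rw [h00, h01, hm0, hm1, ih (t+2*s+2) 0, ih t (s+1)]
    rw [ent_col0]
    -- clean up indices
    rw [show 2*s+(t+1)+1 = 2*s+t+2 by ring, show s+(t+1) = (s+t)+1 from by ring]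
    rw [qChoose_succ_both (show s ≤ s+t by omega)]
    rw [show e2 0 = 0 from rfl, pow_zero, e2_succ]
    rw [show (0:ℕ)+(t+2*s+2) = t+2*s+2 by ring, qChoose_zero]
    rw [show p+2*0+(t+2*s+2)+2 = p+2*s+t+4 by ring, show p+0+1 = p+1 by ring]
    rw [show 2*(p+0)+(t+2*s+2)+2 = 2*(p+1+s)+t+2 by ring]
    rw [show s+1+t = (s+t)+1 from by ring, qChoose_succ_both (show s ≤ s+t by omega)]
    rw [show p+2*(s+1)+t+2 = p+2*s+t+4 by ring, show p+(s+1)+1 = p+s+2 by ring]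
    rw [show 2*(p+(s+1))+t+2 = 2*(p+1+s)+t+2 by ring]
    rw [show p+1+2*s+t+2 = p+2*s+t+3 by ring, show p+1+s+1 = p+s+2 by ring]
    rw [show 2*(p+1+s)+t+2 = (2*(p+1+s)+t+2) from rfl]
    -- express qChoose N (p+1) via qChoose N p
    have hN : qChoose (2*(p+1+s)+t+2) (p+1)
        = qChoose (2*(p+1+s)+t+2) p * (qInt (p+2*s+t+4) / qInt (p+1)) := by
      rw [qChoose_succ_right (show p+1 ≤ 2*(p+1+s)+t+2 by omega),
        show 2*(p+1+s)+t+2-p = p+2*s+t+4 by omega]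
    rw [hN]
    -- now pure algebra
    linear_combination (-(qq^(e2 s) * qChoose (s+t) s * qChoose (2*(p+1+s)+t+2) p))
      * step_scalar p s t
theorem stmt_17 (n k : ℕ) (hk : 1 ≤ k) :
    Matrix.det (Matrix.of fun i j : Fin n =>
        if (j : ℕ) ≤ (i : ℕ) + 1 then
          qq ^ ((((i : ℕ) : ℤ) - ((j : ℕ) : ℤ)) * (((i : ℕ) : ℤ) - ((j : ℕ) : ℤ) - 1) / 2).toNat *
            (qInt (2 * (i : ℕ) + k + 1) / qInt ((i : ℕ) + (j : ℕ) + k)) *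
            qChoose ((i : ℕ) + (j : ℕ) + k) ((i : ℕ) + 1 - (j : ℕ))
        else 0)
      = qChoose (2 * n + k - 1) n := by
  obtain ⟨t, rfl⟩ : ∃ t, k = t + 1 := ⟨k - 1, by omega⟩
  have hM : (Matrix.of fun i j : Fin n =>
      if (j : ℕ) ≤ (i : ℕ) + 1 then
        qq ^ ((((i : ℕ) : ℤ) - ((j : ℕ) : ℤ)) * (((i : ℕ) : ℤ) - ((j : ℕ) : ℤ) - 1) / 2).toNat *
          (qInt (2 * (i : ℕ) + (t+1) + 1) / qInt ((i : ℕ) + (j : ℕ) + (t+1))) *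
          qChoose ((i : ℕ) + (j : ℕ) + (t+1)) ((i : ℕ) + 1 - (j : ℕ))
      else 0) = Bm n (t+1) 0 := by
    funext i j
    rw [Bm_zero]
    rfl
  rw [hM]
  cases n with
  | zero =>
    rw [show (2*0+(t+1)-1) = t by omega]
    rw [Matrix.det_fin_zero, qChoose_zero]
  | succ m =>
    rw [detBm m t 0]
    rw [show e2 0 = 0 from rfl, pow_zero, show (0:ℕ)+t = t from by ring, qChoose_zero]
    rw [show m+2*0+t+2 = m+t+2 by ring, show m+0+1 = m+1 by ring,
      show 2*(m+0)+t+2 = 2*m+t+2 by ring]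
    rw [show 2*(m+1)+(t+1)-1 = (2*m+t+2) by omega]
    rw [show (m+1 : ℕ) = m+1 from rfl]
    have hN : qChoose (2*m+t+2) (m+1)
        = qChoose (2*m+t+2) m * (qInt (m+t+2) / qInt (m+1)) := by
      rw [qChoose_succ_right (show m+1 ≤ 2*m+t+2 by omega),
        show 2*m+t+2-m = m+t+2 by omega]
    rw [hN]
    ring
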